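/- Let Z, Q, P′ be points of the Euclidean plane ℝ² with (Q − Z)·(P′ − Z) = 0 and ‖Q − Z‖ = ‖P′ − Z‖ ≠ 0, and set O := Q + P′ − Z (so that QZP′O is a square), S := midpoint(O, Q), and G := Z + (2/3)(S − Z). Let P be the reflection of P′ across the line through Z and G, let Q′ be the reflection of Q across this line, let K(W) := G − (1/2)(W − G), and let V := 2Q − P. Then: (i) G lies on the line through Q and P′; (ii) K(Z) = S, K(P′) = Q and K(P) = Q′; (iii) V lies on the line through P′ and Q′; and (iv) G − Z = (5/4)(V − G), i.e. the signed ratio ZG/GV = 5/4. -/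

import Mathlib

open EuclideanGeometry AffineMap in
private lemma reflection_pair_eq (Z G p : EuclideanSpace ℝ (Fin 2)) (t : ℝ)
    (h : inner ℝ (Z - G) (p - (AffineMap.lineMap Z G t : EuclideanSpace ℝ (Fin 2))) = (0 : ℝ)) :
    EuclideanGeometry.reflection (line[ℝ, Z, G]) p
      = (2 : ℝ) • (AffineMap.lineMap Z G t : EuclideanSpace ℝ (Fin 2)) - p := by
  set p₀ : EuclideanSpace ℝ (Fin 2) := AffineMap.lineMap Z G t with hp₀def
  have hp₀ : p₀ ∈ line[ℝ, Z, G] := AffineMap.lineMap_mem_affineSpan_pair t Z G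
  have hw : p - p₀ ∈ (line[ℝ, Z, G] : AffineSubspace ℝ (EuclideanSpace ℝ (Fin 2))).directionᗮ := by
    rw [direction_affineSpan, vectorSpan_pair, Submodule.mem_orthogonal_singleton_iff_inner_right]
    simpa using h
  have := EuclideanGeometry.reflection_orthogonal_vadd hp₀ hw
  have hpe : (p - p₀) +ᵥ p₀ = p := by
    simp [vadd_eq_add]
  rw [hpe] at this
  rw [this]
  simp [vadd_eq_add, two_smul]
  abel

open EuclideanGeometry in
/-- The square construction of Theorem 3.4: starting from a square `QZP′O` inscribed
in a circle with center `Z`, with `S` the midpoint of `OQ`, `G = Z + (2/3)(S − Z)`,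
`P` and `Q′` the reflections of `P′` and `Q` in the line `ZG`, `K` the complement map
with respect to `G`, and `V = 2Q − P`, one has: (i) `G` lies on line `QP′`;
(ii) `K(Z) = S`, `K(P′) = Q` and `K(P) = Q′`; (iii) `V` lies on line `P′Q′`;
and (iv) `G − Z = (5/4)(V − G)`. -/
theorem square_construction_ratio (Z Q P' : EuclideanSpace ℝ (Fin 2))
    (hperp : inner ℝ (Q - Z) (P' - Z) = (0 : ℝ))
    (hlen : ‖Q - Z‖ = ‖P' - Z‖) (hne : ‖Q - Z‖ ≠ 0)
    (O S G P Q' V : EuclideanSpace ℝ (Fin 2))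
    (hO : O = Q + P' - Z)
    (hS : S = midpoint ℝ O Q)
    (hG : G = Z + (2/3 : ℝ) • (S - Z))
    (hP : P = EuclideanGeometry.reflection (line[ℝ, Z, G]) P')
    (hQ' : Q' = EuclideanGeometry.reflection (line[ℝ, Z, G]) Q)
    (K : EuclideanSpace ℝ (Fin 2) → EuclideanSpace ℝ (Fin 2))
    (hK : ∀ W, K W = G - (1/2 : ℝ) • (W - G))
    (hV : V = (2 : ℝ) • Q - P) :
    G ∈ line[ℝ, Q, P'] ∧
    (K Z = S ∧ K P' = Q ∧ K P = Q') ∧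
    V ∈ line[ℝ, P', Q'] ∧
    G - Z = (5/4 : ℝ) • (V - G) := by
  set u : EuclideanSpace ℝ (Fin 2) := Q - Z with hu
  set v : EuclideanSpace ℝ (Fin 2) := P' - Z with hv
  have huv : inner ℝ u v = (0 : ℝ) := hperp
  have hvu : inner ℝ v u = (0 : ℝ) := by rw [real_inner_comm]; exact huv
  have hQZ : Q = Z + u := by rw [hu]; abel
  have hPZ : P' = Z + v := by rw [hv]; abel
  have hvv : inner ℝ v v = (inner ℝ u u : ℝ) := by
    rw [real_inner_self_eq_norm_sq, real_inner_self_eq_norm_sq, hlen]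
  have hSval : S = Z + u + (1/2 : ℝ) • v := by
    rw [hS, midpoint_eq_smul_add, invOf_eq_inv, hO, hQZ, hPZ]
    module
  have hGval : G = Z + (2/3 : ℝ) • u + (1/3 : ℝ) • v := by
    rw [hG, hSval]; module
  have key : ∀ a b c d : ℝ, (inner ℝ (a • u + b • v) (c • u + d • v) : ℝ)
      = (a * c + b * d) * inner ℝ u u := by
    intro a b c d
    rw [inner_add_left, inner_add_right, inner_add_right, real_inner_smul_left,
      real_inner_smul_left, real_inner_smul_left, real_inner_smul_left,
      real_inner_smul_right, real_inner_smul_right, real_inner_smul_right,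
      real_inner_smul_right, huv, hvu, hvv]
    ring
  -- reflection of P'
  have hPval : P = Z + (4/5 : ℝ) • u - (3/5 : ℝ) • v := by
    rw [hP, reflection_pair_eq Z G P' (3/5)]
    · rw [AffineMap.lineMap_apply_module, hGval, hPZ]; module
    · have h1 : Z - G = (-(2/3) : ℝ) • u + (-(1/3) : ℝ) • v := by rw [hGval]; module
      have h2 : P' - (AffineMap.lineMap Z G (3/5 : ℝ) : EuclideanSpace ℝ (Fin 2))
          = (-(2/5) : ℝ) • u + (4/5 : ℝ) • v := by
        rw [AffineMap.lineMap_apply_module, hGval, hPZ]; module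
      rw [h1, h2, key]
      norm_num
  -- reflection of Q
  have hQ'val : Q' = Z + (3/5 : ℝ) • u + (4/5 : ℝ) • v := by
    rw [hQ', reflection_pair_eq Z G Q (6/5)]
    · rw [AffineMap.lineMap_apply_module, hGval, hQZ]; module
    · have h1 : Z - G = (-(2/3) : ℝ) • u + (-(1/3) : ℝ) • v := by rw [hGval]; module
      have h2 : Q - (AffineMap.lineMap Z G (6/5 : ℝ) : EuclideanSpace ℝ (Fin 2))
          = (1/5 : ℝ) • u + (-(2/5) : ℝ) • v := by
        rw [AffineMap.lineMap_apply_module, hGval, hQZ]; module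
      rw [h1, h2, key]
      norm_num
  have hVval : V = Z + (6/5 : ℝ) • u + (3/5 : ℝ) • v := by
    rw [hV, hPval, hQZ]; module
  refine ⟨?_, ⟨?_, ?_, ?_⟩, ?_, ?_⟩
  · have : G = AffineMap.lineMap Q P' (1/3 : ℝ) := by
      rw [AffineMap.lineMap_apply_module, hGval, hQZ, hPZ]; module
    rw [this]
    exact AffineMap.lineMap_mem_affineSpan_pair _ _ _
  · rw [hK, hGval, hSval]; module
  · rw [hK, hGval, hPZ, hQZ]; module
  · rw [hK, hGval, hPval, hQ'val]; module
  · have : V = AffineMap.lineMap P' Q' (2 : ℝ) := by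
      rw [AffineMap.lineMap_apply_module, hVval, hPZ, hQ'val]; module
    rw [this]
    exact AffineMap.lineMap_mem_affineSpan_pair _ _ _
  · rw [hGval, hVval]; module
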